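/- Let t_0(z) = (2 - z - √(1-z+z²)) / (3(1-z)) and f(t) = log(t(1-t)(1-(1-z)t)) for fixed real z ∈ [0,1). Then t_0(z) ∈ (0,1), f'(t_0(z)) = 0, and f''(t_0(z)) = -2[2(1-z+z²)² - (2-z)(1-2z)(1+z)√(1-z+z²)]/z² < 0 for z ∈ (0,1). -/

import Mathlib

theorem saddle_point_of_f (z : ℝ) (hz : z ∈ Set.Ico (0 : ℝ) 1) :
    ((2 - z - Real.sqrt (1 - z + z ^ 2)) / (3 * (1 - z)) ∈ Set.Ioo (0 : ℝ) 1 ∧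
      deriv (fun t : ℝ => Real.log (t * (1 - t) * (1 - (1 - z) * t)))
        ((2 - z - Real.sqrt (1 - z + z ^ 2)) / (3 * (1 - z))) = 0) ∧
    (z ∈ Set.Ioo (0 : ℝ) 1 →
      deriv (deriv (fun t : ℝ => Real.log (t * (1 - t) * (1 - (1 - z) * t))))
        ((2 - z - Real.sqrt (1 - z + z ^ 2)) / (3 * (1 - z))) =
        -2 * (2 * (1 - z + z ^ 2) ^ 2 -
          (2 - z) * (1 - 2 * z) * (1 + z) * Real.sqrt (1 - z + z ^ 2)) / z ^ 2 ∧
      deriv (deriv (fun t : ℝ => Real.log (t * (1 - t) * (1 - (1 - z) * t))))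
        ((2 - z - Real.sqrt (1 - z + z ^ 2)) / (3 * (1 - z))) < 0) := by
  obtain ⟨hz0, hz1⟩ := hz
  have hspos : (0:ℝ) < 1 - z + z ^ 2 := by nlinarith
  set s : ℝ := Real.sqrt (1 - z + z ^ 2) with hsdef
  have hs2 : s ^ 2 = 1 - z + z ^ 2 := Real.sq_sqrt hspos.le
  have hs0 : 0 < s := Real.sqrt_pos.mpr hspos
  have ha : (0:ℝ) < 1 - z := by linarith
  have hslt : s < 2 - z := by nlinarith
  have hsgt : 2 * z - 1 < s := by nlinarith
  set t0 : ℝ := (2 - z - s) / (3 * (1 - z)) with ht0def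
  have ht0pos : 0 < t0 := div_pos (by linarith) (by linarith)
  have ht0lt1 : t0 < 1 := (div_lt_one (by linarith)).mpr (by linarith)
  have hP : ∀ t : ℝ, HasDerivAt (fun t : ℝ => t * (1 - t) * (1 - (1 - z) * t))
      (3 * (1 - z) * t ^ 2 - 2 * (2 - z) * t + 1) t := by
    intro t
    have h := ((hasDerivAt_id' t).mul ((hasDerivAt_const t (1:ℝ)).sub (hasDerivAt_id' t))).mul
      ((hasDerivAt_const t (1:ℝ)).sub ((hasDerivAt_id' t).const_mul (1 - z)))
    refine h.congr_deriv ?_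
    simp only [Pi.mul_apply, Pi.sub_apply]
    ring
  have hQ : ∀ t : ℝ, HasDerivAt (fun t : ℝ => 3 * (1 - z) * t ^ 2 - 2 * (2 - z) * t + 1)
      (6 * (1 - z) * t - 2 * (2 - z)) t := by
    intro t
    have h := ((((hasDerivAt_pow 2 t).const_mul (3 * (1 - z))).sub
      ((hasDerivAt_id' t).const_mul (2 * (2 - z)))).add_const 1)
    refine h.congr_deriv ?_
    simp
    ring
  have h3ne : (3 * (1 - z) : ℝ) ≠ 0 := by positivity
  have hfac2 : 1 - t0 = (1 - 2 * z + s) / (3 * (1 - z)) := by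
    rw [ht0def]; field_simp; ring
  have hfac3 : 1 - (1 - z) * t0 = (1 + z + s) / 3 := by
    rw [ht0def]; field_simp; ring
  have hPt0 : 0 < t0 * (1 - t0) * (1 - (1 - z) * t0) := by
    apply mul_pos (mul_pos ht0pos (by linarith))
    rw [hfac3]; positivity
  have hPne : t0 * (1 - t0) * (1 - (1 - z) * t0) ≠ 0 := ne_of_gt hPt0
  have hQt0 : 3 * (1 - z) * t0 ^ 2 - 2 * (2 - z) * t0 + 1 = 0 := by
    rw [ht0def]
    field_simp
    linear_combination hs2
  have hlog : ∀ t : ℝ, t * (1 - t) * (1 - (1 - z) * t) ≠ 0 →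
      HasDerivAt (fun t : ℝ => Real.log (t * (1 - t) * (1 - (1 - z) * t)))
        ((3 * (1 - z) * t ^ 2 - 2 * (2 - z) * t + 1) / (t * (1 - t) * (1 - (1 - z) * t))) t :=
    fun t ht => (hP t).log ht
  have hderiv1 : deriv (fun t : ℝ => Real.log (t * (1 - t) * (1 - (1 - z) * t))) t0 = 0 := by
    rw [(hlog t0 hPne).deriv, hQt0, zero_div]
  refine ⟨⟨⟨ht0pos, ht0lt1⟩, hderiv1⟩, ?_⟩
  rintro ⟨hz0', -⟩
  have hC : Continuous fun t : ℝ => t * (1 - t) * (1 - (1 - z) * t) :=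
    (continuous_id.mul (continuous_const.sub continuous_id)).mul
      (continuous_const.sub (continuous_const.mul continuous_id))
  have hUopen : IsOpen {t : ℝ | t * (1 - t) * (1 - (1 - z) * t) ≠ 0} :=
    isOpen_compl_singleton.preimage hC
  have hmem : {t : ℝ | t * (1 - t) * (1 - (1 - z) * t) ≠ 0} ∈ nhds t0 :=
    hUopen.mem_nhds hPne
  have heq : deriv (fun t : ℝ => Real.log (t * (1 - t) * (1 - (1 - z) * t))) =ᶠ[nhds t0]
      fun t : ℝ => (3 * (1 - z) * t ^ 2 - 2 * (2 - z) * t + 1) /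
        (t * (1 - t) * (1 - (1 - z) * t)) := by
    filter_upwards [hmem] with t ht using (hlog t ht).deriv
  have hd2 : HasDerivAt (fun t : ℝ => (3 * (1 - z) * t ^ 2 - 2 * (2 - z) * t + 1) /
        (t * (1 - t) * (1 - (1 - z) * t)))
      (((6 * (1 - z) * t0 - 2 * (2 - z)) * (t0 * (1 - t0) * (1 - (1 - z) * t0)) -
        (3 * (1 - z) * t0 ^ 2 - 2 * (2 - z) * t0 + 1) *
          (3 * (1 - z) * t0 ^ 2 - 2 * (2 - z) * t0 + 1)) /
        (t0 * (1 - t0) * (1 - (1 - z) * t0)) ^ 2) t0 := (hQ t0).div (hP t0) hPne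
  have hQ't0 : 6 * (1 - z) * t0 - 2 * (2 - z) = -2 * s := by
    rw [ht0def]; field_simp; ring
  have hval : deriv (deriv (fun t : ℝ => Real.log (t * (1 - t) * (1 - (1 - z) * t)))) t0
      = -2 * s / (t0 * (1 - t0) * (1 - (1 - z) * t0)) := by
    rw [heq.deriv_eq, hd2.deriv, hQt0, hQ't0]
    rw [mul_zero, sub_zero, pow_two, mul_div_mul_right _ _ hPne]
  have hPval : t0 * (1 - t0) * (1 - (1 - z) * t0)
      = (2 - z - s) * ((1 - 2 * z + s) * (1 + z + s)) / (27 * (1 - z) ^ 2) := by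
    rw [hfac2, hfac3, ht0def]
    field_simp
    ring
  have hcross : s * (27 * (1 - z) ^ 2) * z ^ 2 =
      (2 * (1 - z + z ^ 2) ^ 2 - (2 - z) * (1 - 2 * z) * (1 + z) * s) *
        ((2 - z - s) * ((1 - 2 * z + s) * (1 + z + s))) := by
    linear_combination (4 + 2*s - 2*s^2 - 10*z - 4*z*s + 3*z*s^2 + 4*z^2 + 6*z^2*s + 3*z^2*s^2
      + 4*z^3 - 4*z^3*s - 2*z^3*s^2 - 10*z^4 + 2*z^4*s + 4*z^5) * hs2
  have hDpos : 0 < (2 - z - s) * ((1 - 2 * z + s) * (1 + z + s)) := by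
    apply mul_pos (by linarith)
    apply mul_pos (by linarith) (by linarith)
  have hkey : -2 * s / (t0 * (1 - t0) * (1 - (1 - z) * t0)) =
      -2 * (2 * (1 - z + z ^ 2) ^ 2 - (2 - z) * (1 - 2 * z) * (1 + z) * s) / z ^ 2 := by
    rw [hPval, div_div_eq_mul_div,
      div_eq_div_iff hDpos.ne' (pow_ne_zero 2 hz0'.ne')]
    linear_combination (-2 : ℝ) * hcross
  constructor
  · rw [hval, hkey]
  · rw [hval]
    apply div_neg_of_neg_of_pos (by linarith) hPt0
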